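/- For every positive integer n there exists a multivariate polynomial p in n variables over the complex numbers having exactly 2^(n-1) nonzero monomials (i.e., its support has cardinality 2^(n-1)) such that the image of the hypercube {-1,1}^n under evaluation of p equals the set of all 2^n-th roots of unity {exp(2*pi*i*k/2^n) : k = 0, 1, ..., 2^n - 1}. -/

import Mathlib

open MvPolynomial Finset

noncomputable def peZ (n : ℕ) : ℂ := Complex.exp (2 * Real.pi * Complex.I / 2 ^ n)

lemma peZ_pow (n k : ℕ) : peZ n ^ k = Complex.exp (2 * Real.pi * Complex.I * k / 2 ^ n) := by
  rw [peZ, ← Complex.exp_nat_mul]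
  congr 1
  ring

lemma peZ_pow_ne_one {n k : ℕ} (h0 : 0 < k) (h1 : k < 2 ^ n) : peZ n ^ k ≠ 1 := by
  rw [peZ_pow]
  intro h
  rw [Complex.exp_eq_one_iff] at h
  obtain ⟨m, hm⟩ := h
  have h2 : ((2 : ℂ)) ^ n ≠ 0 := pow_ne_zero _ two_ne_zero
  have hpi : ((Real.pi : ℂ)) ≠ 0 := Complex.ofReal_ne_zero.mpr Real.pi_ne_zero
  have hne : (2 * (Real.pi : ℂ) * Complex.I) ≠ 0 :=
    mul_ne_zero (mul_ne_zero two_ne_zero hpi) Complex.I_ne_zero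
  rw [div_eq_iff h2] at hm
  have h4 : (2 * (Real.pi:ℂ) * Complex.I) * (k : ℂ) = (2 * (Real.pi:ℂ) * Complex.I) * ((m : ℂ) * 2 ^ n) := by
    linear_combination hm
  have h5 : (k : ℂ) = (m : ℂ) * 2 ^ n := mul_left_cancel₀ hne h4
  have hk : (k : ℤ) = m * 2 ^ n := by exact_mod_cast h5
  have A : (0:ℤ) < 2 ^ n := by positivity
  have B : (k:ℤ) < 2 ^ n := by exact_mod_cast h1
  have C : (0:ℤ) < (k:ℤ) := by exact_mod_cast h0
  rw [hk] at B C
  have hm0 : 0 < m := by nlinarith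
  have hm1 : 1 ≤ m := hm0
  nlinarith

lemma peZ_neg_one {n : ℕ} (hn : 0 < n) : peZ n ^ 2 ^ (n-1) = -1 := by
  rw [peZ_pow]
  have h2 : ((2:ℂ)) ^ (n-1) ≠ 0 := pow_ne_zero _ two_ne_zero
  have hcast : ((2 ^ (n-1) : ℕ) : ℂ) = 2 ^ (n-1) := by push_cast; ring
  have hsplit : ((2:ℂ)) ^ n = 2 ^ (n-1) * 2 := by
    rw [← pow_succ]; congr 1; omega
  rw [hcast, hsplit, show 2 * (Real.pi:ℂ) * Complex.I * 2^(n-1) / (2^(n-1)*2) = Real.pi * Complex.I by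
    field_simp]
  exact Complex.exp_pi_mul_I

lemma sum_testBit : ∀ (n k : ℕ), k < 2 ^ n → ∑ i ∈ Finset.range n, (if k.testBit i then 2 ^ i else 0) = k := by
  intro n
  induction n with
  | zero => intro k hk; interval_cases k; simp
  | succ n ih =>
    intro k hk
    rw [Finset.sum_range_succ']
    have h0 : (if k.testBit 0 then 2^0 else 0) = k % 2 := by
      rw [Nat.testBit_zero]
      rcases Nat.mod_two_eq_zero_or_one k with h | h <;> simp [h]
    have hstep : ∀ i, (if k.testBit (i+1) then 2^(i+1) else 0) = 2 * (if (k/2).testBit i then 2^i else 0) := by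
      intro i; rw [Nat.testBit_succ]; split <;> ring
    have hmain : ∑ i ∈ Finset.range n, (if k.testBit (i+1) then 2^(i+1) else 0)
        = 2 * ∑ i ∈ Finset.range n, (if (k/2).testBit i then 2^i else 0) := by
      rw [Finset.mul_sum]; exact Finset.sum_congr rfl fun i _ => hstep i
    have hdiv : k / 2 < 2 ^ n := by
      rw [Nat.div_lt_iff_lt_mul (by norm_num)]
      calc k < 2 ^ (n+1) := hk
        _ = 2 ^ n * 2 := by rw [pow_succ]
    rw [h0, hmain, ih (k/2) hdiv]
    omega

lemma prod_monomial {σ R ι : Type*} [CommSemiring R] (s : Finset ι) (d : ι → (σ →₀ ℕ)) (c : ι → R) :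
    ∏ i ∈ s, MvPolynomial.monomial (d i) (c i) = MvPolynomial.monomial (∑ i ∈ s, d i) (∏ i ∈ s, c i) := by
  classical
  induction s using Finset.induction_on with
  | empty => simp
  | insert _ _ h ih =>
    rw [Finset.prod_insert h, Finset.prod_insert h, Finset.sum_insert h, ih, MvPolynomial.monomial_mul]

noncomputable def peA (n i : ℕ) : ℂ := (1 + peZ n ^ 2 ^ i) / 2
noncomputable def peB (n i : ℕ) : ℂ := (1 - peZ n ^ 2 ^ i) / 2

lemma peA_one (n i : ℕ) : peA n i + peB n i * 1 = 1 := by unfold peA peB; ring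
lemma peA_negone (n i : ℕ) : peA n i + peB n i * (-1) = peZ n ^ 2 ^ i := by unfold peA peB; ring

lemma peB_ne_zero {n i : ℕ} (h : i < n) : peB n i ≠ 0 := by
  intro hb
  have h1 : peZ n ^ 2 ^ i = 1 := by
    unfold peB at hb
    field_simp at hb
    linear_combination -hb
  exact peZ_pow_ne_one (Nat.pow_pos (by norm_num)) (Nat.pow_lt_pow_right one_lt_two h) h1

lemma peA_ne_zero {n i : ℕ} (h : i + 1 < n) : peA n i ≠ 0 := by
  intro ha
  have h1 : peZ n ^ 2 ^ i = -1 := by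
    unfold peA at ha
    field_simp at ha
    linear_combination ha
  have h2 : peZ n ^ 2 ^ (i+1) = 1 := by
    rw [pow_succ, pow_mul, h1]; norm_num
  exact peZ_pow_ne_one (Nat.pow_pos (by norm_num)) (Nat.pow_lt_pow_right one_lt_two h) h2

lemma pe_eval {n : ℕ} (hn : 0 < n) (ln : Fin n) (hlnv : (ln : ℕ) = n - 1)
    (s : Fin n → ℂ) (hs : ∀ i, s i = 1 ∨ s i = -1) :
    MvPolynomial.eval s ((X ln : MvPolynomial (Fin n) ℂ) *
        ∏ i ∈ Finset.univ.erase ln, (C (peA n i) + C (peB n i) * X i))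
      = peZ n ^ (∑ i : Fin n, if s i = -1 then 2 ^ (i:ℕ) else 0) := by
  classical
  rw [← Finset.prod_pow_eq_pow_sum]
  have hif : ∀ i : Fin n, peZ n ^ (if s i = -1 then 2 ^ (i:ℕ) else 0)
      = (if s i = -1 then peZ n ^ 2 ^ (i:ℕ) else 1) := by
    intro i; split <;> simp
  simp_rw [hif]
  rw [← Finset.mul_prod_erase Finset.univ _ (Finset.mem_univ ln)]
  simp only [map_mul, MvPolynomial.eval_prod, map_add, MvPolynomial.eval_C,
    MvPolynomial.eval_X, MvPolynomial.eval_mul]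
  congr 1
  · rcases hs ln with h | h <;> rw [h]
    · rw [if_neg (by norm_num)]
    · rw [if_pos rfl, hlnv, peZ_neg_one hn]
  · refine Finset.prod_congr rfl fun i hi => ?_
    rcases hs i with h | h <;> rw [h]
    · rw [if_neg (by norm_num)]
      exact peA_one n i
    · rw [if_pos rfl]
      exact peA_negone n i

lemma pe_expand {n : ℕ} (ln : Fin n) :
    (X ln : MvPolynomial (Fin n) ℂ) *
        ∏ i ∈ Finset.univ.erase ln, (C (peA n i) + C (peB n i) * X i)
      = ∑ T ∈ (Finset.univ.erase ln).powerset,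
          monomial (Finsupp.single ln 1 + ∑ i ∈ T, Finsupp.single i 1)
            ((∏ i ∈ T, peB n i) * ∏ i ∈ (Finset.univ.erase ln) \ T, peA n i) := by
  classical
  have comm : ∀ i : Fin n, (C (peA n i) + C (peB n i) * X i : MvPolynomial (Fin n) ℂ)
      = C (peB n i) * X i + C (peA n i) := fun i => by ring
  simp_rw [comm]
  rw [Finset.prod_add, Finset.mul_sum]
  refine Finset.sum_congr rfl fun T hT => ?_
  have h1 : ∏ i ∈ T, (C (peB n i) * X i : MvPolynomial (Fin n) ℂ)
      = monomial (∑ i ∈ T, Finsupp.single i 1) (∏ i ∈ T, peB n (i:ℕ)) := by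
    simp_rw [MvPolynomial.C_mul_X_eq_monomial]
    rw [prod_monomial]
  have h2 : ∏ i ∈ (Finset.univ.erase ln) \ T, (C (peA n i) : MvPolynomial (Fin n) ℂ)
      = monomial 0 (∏ i ∈ (Finset.univ.erase ln) \ T, peA n (i:ℕ)) := by
    simp_rw [MvPolynomial.C_apply]
    rw [prod_monomial, Finset.sum_const, smul_zero]
  have h3 : (X ln : MvPolynomial (Fin n) ℂ) = monomial (Finsupp.single ln 1) 1 := rfl
  rw [h1, h2, h3, MvPolynomial.monomial_mul, MvPolynomial.monomial_mul, one_mul, add_zero]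

lemma pe_support_card {n : ℕ} (hn : 0 < n) (ln : Fin n) (hlnv : (ln:ℕ) = n-1) :
    ((X ln : MvPolynomial (Fin n) ℂ) *
        ∏ i ∈ Finset.univ.erase ln, (C (peA n i) + C (peB n i) * X i)).support.card
      = 2 ^ (n-1) := by
  classical
  rw [pe_expand]
  set u : Finset (Fin n) := Finset.univ.erase ln with hu
  set e : Finset (Fin n) → (Fin n →₀ ℕ) :=
    fun T => Finsupp.single ln 1 + ∑ i ∈ T, Finsupp.single i 1 with he
  set c : Finset (Fin n) → ℂ :=
    fun T => (∏ i ∈ T, peB n i) * ∏ i ∈ u \ T, peA n i with hc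
  have eapp : ∀ T : Finset (Fin n), ∀ i : Fin n, i ≠ ln →
      (e T) i = if i ∈ T then 1 else 0 := by
    intro T i hi
    simp only [he, Finsupp.add_apply, Finsupp.single_apply, if_neg (Ne.symm hi),
      Finsupp.finset_sum_apply, zero_add]
    rw [Finset.sum_ite_eq' T i (fun _ => 1)]
  have einj : ∀ T1 ∈ u.powerset, ∀ T2 ∈ u.powerset, e T1 = e T2 → T1 = T2 := by
    intro T1 hT1 T2 hT2 h
    have hT1' := Finset.mem_powerset.mp hT1
    have hT2' := Finset.mem_powerset.mp hT2
    ext i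
    by_cases hi : i = ln
    · subst hi
      constructor <;> intro hmem
      · exact absurd (Finset.mem_erase.mp (hT1' hmem)).1 (by simp)
      · exact absurd (Finset.mem_erase.mp (hT2' hmem)).1 (by simp)
    · have h1 := eapp T1 i hi
      have h2 := eapp T2 i hi
      have := DFunLike.congr_fun h i
      rw [h1, h2] at this
      by_cases m1 : i ∈ T1 <;> by_cases m2 : i ∈ T2 <;> simp_all
  have cne : ∀ T ∈ u.powerset, c T ≠ 0 := by
    intro T hT
    have hT' := Finset.mem_powerset.mp hT
    refine mul_ne_zero (Finset.prod_ne_zero_iff.mpr fun i hi => peB_ne_zero i.isLt)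
      (Finset.prod_ne_zero_iff.mpr fun i hi => ?_)
    have hiu : i ∈ u := (Finset.mem_sdiff.mp hi).1
    have hine : i ≠ ln := (Finset.mem_erase.mp hiu).1
    have : (i:ℕ) ≠ n - 1 := fun h => hine (Fin.ext (h.trans hlnv.symm))
    have := i.isLt
    exact peA_ne_zero (by omega)
  have hsupp : (∑ T ∈ u.powerset, monomial (e T) (c T)).support = u.powerset.image e := by
    ext d
    rw [MvPolynomial.mem_support_iff, MvPolynomial.coeff_sum]
    simp only [MvPolynomial.coeff_monomial]
    constructor
    · intro hd
      by_contra hc'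
      apply hd
      apply Finset.sum_eq_zero
      intro T hT
      rw [if_neg]
      intro h
      exact hc' (Finset.mem_image.mpr ⟨T, hT, h⟩)
    · intro hd
      obtain ⟨T, hT, hTd⟩ := Finset.mem_image.mp hd
      rw [Finset.sum_eq_single T
        (fun T' hT' hne => if_neg (fun h => hne (einj T' hT' T hT (h.trans hTd.symm))))
        (fun h => absurd hT h)]
      rw [if_pos hTd]
      exact cne T hT
  rw [hsupp, Finset.card_image_of_injOn (fun T1 hT1 T2 hT2 h => einj T1 hT1 T2 hT2 h),
    Finset.card_powerset]
  congr 1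
  rw [hu, Finset.card_erase_of_mem (Finset.mem_univ ln), Finset.card_univ, Fintype.card_fin]



/-- Phase encoding lemma: for every positive integer `n` there is a multivariate
polynomial `p` in `n` variables over `ℂ` with exactly `2^(n-1)` nonzero monomials
whose image of the sign hypercube `{-1,1}^n` is the set of all `2^n`-th roots of
unity `{exp(2πik/2^n) : k = 0, …, 2^n - 1}`. -/
theorem phase_encoding (n : ℕ) (hn : 0 < n) :
    ∃ p : MvPolynomial (Fin n) ℂ,
      p.support.card = 2 ^ (n - 1) ∧
      (fun s : Fin n → ℂ => MvPolynomial.eval s p) ''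
          {s : Fin n → ℂ | ∀ i, s i = 1 ∨ s i = -1} =
        {z : ℂ | ∃ k : ℕ, k < 2 ^ n ∧
          z = Complex.exp (2 * Real.pi * Complex.I * k / 2 ^ n)} := by
  classical
  have hln : n - 1 < n := by omega
  set ln : Fin n := ⟨n - 1, hln⟩ with hlndef
  have hlnv : (ln : ℕ) = n - 1 := rfl
  refine ⟨(X ln : MvPolynomial (Fin n) ℂ) *
      ∏ i ∈ Finset.univ.erase ln, (C (peA n i) + C (peB n i) * X i),
    pe_support_card hn ln hlnv, ?_⟩
  ext w
  simp only [Set.mem_image, Set.mem_setOf_eq]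
  constructor
  · rintro ⟨s, hs, rfl⟩
    refine ⟨∑ i : Fin n, if s i = -1 then 2 ^ (i:ℕ) else 0, ?_, ?_⟩
    · have h1 : (∑ i : Fin n, if s i = -1 then 2 ^ (i:ℕ) else 0)
          ≤ ∑ i : Fin n, 2 ^ (i:ℕ) :=
        Finset.sum_le_sum fun i _ => by split <;> simp
      rw [Fin.sum_univ_eq_sum_range (fun i => 2^i) n] at h1
      have h2 : ∑ i ∈ Finset.range n, 2^i = 2^n - 1 := by
        rw [Nat.geomSum_eq le_rfl]; simp
      have h3 : 1 ≤ 2^n := Nat.one_le_two_pow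
      omega
    · rw [show (MvPolynomial.eval s) ((X ln : MvPolynomial (Fin n) ℂ) *
          ∏ i ∈ Finset.univ.erase ln, (C (peA n i) + C (peB n i) * X i))
          = peZ n ^ (∑ i : Fin n, if s i = -1 then 2 ^ (i:ℕ) else 0) from
        pe_eval hn ln hlnv s hs]
      rw [peZ_pow]
  · rintro ⟨k, hk, rfl⟩
    refine ⟨fun i => if k.testBit (i:ℕ) then -1 else 1, fun i => by
      by_cases h : k.testBit (i:ℕ) <;> simp [h], ?_⟩
    rw [show (MvPolynomial.eval (fun i : Fin n => if k.testBit (i:ℕ) then (-1:ℂ) else 1))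
        ((X ln : MvPolynomial (Fin n) ℂ) *
          ∏ i ∈ Finset.univ.erase ln, (C (peA n i) + C (peB n i) * X i))
        = peZ n ^ (∑ i : Fin n,
            if (if k.testBit (i:ℕ) then (-1:ℂ) else 1) = -1 then 2 ^ (i:ℕ) else 0) from
      pe_eval hn ln hlnv _ (fun i => by
        by_cases h : k.testBit (i:ℕ) <;> simp [h])]
    have hsum : (∑ i : Fin n,
        if (if k.testBit (i:ℕ) then (-1:ℂ) else 1) = -1 then 2 ^ (i:ℕ) else 0) = k := by
      have : ∀ i : Fin n,
          (if (if k.testBit (i:ℕ) then (-1:ℂ) else 1) = -1 then 2 ^ (i:ℕ) else 0)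
            = (if k.testBit (i:ℕ) then 2 ^ (i:ℕ) else 0) := by
        intro i
        by_cases h : k.testBit (i:ℕ)
        · simp [h]
        · norm_num [h]
      simp_rw [this]
      rw [Fin.sum_univ_eq_sum_range (fun i => if k.testBit i then 2^i else 0) n]
      exact sum_testBit n k hk
    rw [hsum, peZ_pow]
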